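/- Let ε ∈ (0,1], k ∈ ℕ, K = 2^{⌈log₂(k+1)⌉}, and let W be the Hadamard Response channel from [k] to [K] with parameter ε. Let α_H = (e^ε−1)/(e^ε+1). For a probability distribution p on [k], let q be the output distribution on [K], i.e. q(z) = Σ_{x∈[k]} W(z|x) p(x), and define q*(z) = 1/K + (α_H/K)(2|D_z|/k − 1), where D_z = {x ∈ [k] : z ∈ C_x}. Then q* is a probability distribution on [K] with ‖q*‖₂ ≤ (1+α_H)/√K, and ‖q − q*‖₂² = (α_H²/K)·‖p − u‖₂², where u is the uniform distribution on [k]. In particular, if p = u then q = q*, and if TV(p,u) > γ then ‖q − q*‖₂² > 4 α_H² γ²/(k K). -/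

import Mathlib

open Finset

/-- Entry of the Sylvester Hadamard matrix of order `2^t`, at row `a`, column `b`
(indices in `{0, …, 2^t − 1}`): `(−1)^{⟨a,b⟩}` where `⟨a,b⟩` is the inner product
mod 2 of the binary representations of `a` and `b`. -/
def hadSign (t a b : ℕ) : ℤ :=
  if (∑ r ∈ Finset.range t, if a.testBit r ∧ b.testBit r then 1 else 0) % 2 = 0 then 1
  else -1

/-- Output alphabet size for Hadamard Response: `K = 2^{⌈log₂(k+1)⌉}`. -/
def hrK (k : ℕ) : ℕ := 2 ^ Nat.clog 2 (k + 1)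

noncomputable def alphaH (ε : ℝ) : ℝ := (Real.exp ε - 1) / (Real.exp ε + 1)

/-- The Hadamard Response channel `W(z|x)`: with the set `C_x ⊆ [K]` encoded by the
`φ(x)`-th row of the Hadamard matrix (`z ∈ C_x` iff the `(φ(x), z)` entry is `+1`),
`W(z|x) = (2/K)·e^ε/(e^ε+1)` for `z ∈ C_x` and `(2/K)·1/(e^ε+1)` otherwise. -/
noncomputable def hrW (ε : ℝ) {k : ℕ} (φ : Fin k → Fin (hrK k)) (x : Fin k)
    (z : Fin (hrK k)) : ℝ :=
  if hadSign (Nat.clog 2 (k + 1)) (φ x).val z.val = 1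
    then (2 / (hrK k : ℝ)) * (Real.exp ε / (Real.exp ε + 1))
    else (2 / (hrK k : ℝ)) * (1 / (Real.exp ε + 1))

/-- Output distribution `q` of Hadamard Response when the input distribution is `p`. -/
noncomputable def hrOut (ε : ℝ) {k : ℕ} (φ : Fin k → Fin (hrK k)) (p : Fin k → ℝ)
    (z : Fin (hrK k)) : ℝ :=
  ∑ x, hrW ε φ x z * p x

/-- `|D_z|`, the number of inputs `x ∈ [k]` with `z ∈ C_x`. -/
def Dcard {k : ℕ} (φ : Fin k → Fin (hrK k)) (z : Fin (hrK k)) : ℕ :=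
  (Finset.univ.filter fun x : Fin k =>
    hadSign (Nat.clog 2 (k + 1)) (φ x).val z.val = 1).card

/-- The reference distribution `q*(z) = 1/K + (α_H/K)(2|D_z|/k − 1)`. -/
noncomputable def hrQstar (ε : ℝ) {k : ℕ} (φ : Fin k → Fin (hrK k))
    (z : Fin (hrK k)) : ℝ :=
  1 / (hrK k : ℝ) + (alphaH ε / (hrK k : ℝ)) * (2 * (Dcard φ z : ℝ) / (k : ℝ) - 1)

lemma hadSign_eq_one_or (t a b : ℕ) : hadSign t a b = 1 ∨ hadSign t a b = -1 := by
  unfold hadSign; split <;> simp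

lemma hadSign_zero (t z : ℕ) : hadSign t 0 z = 1 := by
  simp [hadSign]

lemma hadSign_flip (t a z r : ℕ) (hr : r < t) (ha : a.testBit r = true) :
    hadSign t a (z ^^^ 2 ^ r) = - hadSign t a z := by
  have hrm : r ∈ Finset.range t := Finset.mem_range.mpr hr
  have hbit : ∀ s, (z ^^^ 2 ^ r).testBit s = ((z.testBit s).xor (decide (r = s))) := by
    intro s; rw [Nat.testBit_xor, Nat.testBit_two_pow]
  have hcongr : ∀ s ∈ (Finset.range t).erase r,
      (if a.testBit s ∧ (z ^^^ 2 ^ r).testBit s then (1:ℕ) else 0)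
        = (if a.testBit s ∧ z.testBit s then 1 else 0) := by
    intro s hs
    have hsr : r ≠ s := fun h => (Finset.mem_erase.mp hs).1 h.symm
    rw [hbit s]; simp [hsr]
  have h1 := Finset.add_sum_erase (Finset.range t)
      (fun s => if a.testBit s ∧ (z ^^^ 2 ^ r).testBit s then (1:ℕ) else 0) hrm
  have h2 := Finset.add_sum_erase (Finset.range t)
      (fun s => if a.testBit s ∧ z.testBit s then (1:ℕ) else 0) hrm
  rw [Finset.sum_congr rfl hcongr] at h1
  unfold hadSign
  rw [← h1, ← h2]
  simp only [hbit r, ha, true_and]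
  rcases Bool.eq_false_or_eq_true (z.testBit r) with hz | hz <;>
    · rw [hz]
      simp only [Bool.xor_true, Bool.xor_false, Bool.not_true, Bool.not_false,
        decide_true, if_true, if_false]
      split <;> split <;> simp_all <;> omega

lemma hadSign_row_sum (t a : ℕ) (ha : a ≠ 0) (hat : a < 2 ^ t) :
    ∑ z ∈ Finset.range (2 ^ t), hadSign t a z = 0 := by
  obtain ⟨r, hr⟩ := Nat.exists_testBit_of_ne_zero ha
  have hrt : r < t := by
    by_contra h
    have h2 : a < 2 ^ r := lt_of_lt_of_le hat (Nat.pow_le_pow_right (by norm_num) (le_of_not_gt h))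
    rw [Nat.testBit_lt_two_pow h2] at hr
    exact Bool.false_ne_true hr
  have hpr : 2 ^ r < 2 ^ t := Nat.pow_lt_pow_right (by norm_num) hrt
  exact Finset.sum_involution (fun z _ => z ^^^ 2 ^ r)
    (fun z _ => by rw [hadSign_flip t a z r hrt hr]; ring)
    (fun z _ _ h => by
      have := congrArg (Nat.testBit · r) h
      simp [Nat.testBit_xor, Nat.testBit_two_pow] at this)
    (fun z hz => Finset.mem_range.mpr (Nat.xor_lt_two_pow (Finset.mem_range.mp hz) hpr))
    (fun z _ => by show z ^^^ 2 ^ r ^^^ 2 ^ r = z; rw [Nat.xor_assoc, Nat.xor_self, Nat.xor_zero])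

lemma hadSign_mul (t a b z : ℕ) :
    hadSign t a z * hadSign t b z = hadSign t (a ^^^ b) z := by
  have key : (∑ r ∈ Finset.range t, if (a ^^^ b).testBit r ∧ z.testBit r then (1:ℕ) else 0)
      + 2 * (∑ r ∈ Finset.range t, if a.testBit r ∧ b.testBit r ∧ z.testBit r then 1 else 0)
      = (∑ r ∈ Finset.range t, if a.testBit r ∧ z.testBit r then 1 else 0)
      + (∑ r ∈ Finset.range t, if b.testBit r ∧ z.testBit r then 1 else 0) := by
    rw [Finset.mul_sum, ← Finset.sum_add_distrib, ← Finset.sum_add_distrib]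
    apply Finset.sum_congr rfl
    intro r _
    rw [Nat.testBit_xor]
    rcases Bool.eq_false_or_eq_true (a.testBit r) with h1|h1 <;>
    rcases Bool.eq_false_or_eq_true (b.testBit r) with h2|h2 <;>
    rcases Bool.eq_false_or_eq_true (z.testBit r) with h3|h3 <;>
      simp [h1, h2, h3]
  unfold hadSign
  split <;> split <;> split <;> omega

lemma final_ineq (α γ kR Kr S Q : ℝ) (hα2 : 0 < α^2) (hk : 0 < kR) (hK : 0 < Kr)
    (hCS : S^2 ≤ kR * Q) (hTV : 1/2 * S > γ) (hγ : 0 < γ) :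
    4 * α^2 * γ^2 / (kR * Kr) < α^2 / Kr * Q := by
  have hS2 : 2*γ < S := by linarith
  have hkQ : 4*γ^2 < kR * Q := by nlinarith
  rw [show α^2/Kr*Q = (α^2*Q)/Kr from by ring, div_lt_div_iff₀ (by positivity) hK]
  nlinarith [mul_lt_mul_of_pos_left hkQ (mul_pos hα2 hK)]


/-- Structural result for uniformity testing via Hadamard Response: `q*` is a
probability distribution with `‖q*‖₂ ≤ (1+α_H)/√K`, the squared `ℓ₂` distance of the
HR output distribution `q` to `q*` equals `(α_H²/K)·‖p − u‖₂²`; in particular `q = q*`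
when `p` is uniform, and `‖q − q*‖₂² > 4α_H²γ²/(kK)` when `TV(p, u) > γ`. -/
theorem hr_uniformity_structural
    (ε : ℝ) (hε0 : 0 < ε) (hε1 : ε ≤ 1) (k : ℕ)
    (φ : Fin k → Fin (hrK k)) (hφ : Function.Injective φ) (hφ0 : ∀ x, (φ x).val ≠ 0)
    (p : Fin k → ℝ) (hp0 : ∀ x, 0 ≤ p x) (hp1 : ∑ x, p x = 1)
    (γ : ℝ) (hγ : 0 < γ) :
    (∀ z, 0 ≤ hrQstar ε φ z)
    ∧ (∑ z, hrQstar ε φ z = 1)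
    ∧ Real.sqrt (∑ z, (hrQstar ε φ z) ^ 2) ≤ (1 + alphaH ε) / Real.sqrt (hrK k)
    ∧ (∑ z, (hrOut ε φ p z - hrQstar ε φ z) ^ 2
        = (alphaH ε) ^ 2 / (hrK k : ℝ) * ∑ x, (p x - 1 / (k : ℝ)) ^ 2)
    ∧ ((p = fun _ => 1 / (k : ℝ)) → hrOut ε φ p = hrQstar ε φ)
    ∧ ((1 / 2) * (∑ x, |p x - 1 / (k : ℝ)|) > γ →
        ∑ z, (hrOut ε φ p z - hrQstar ε φ z) ^ 2
          > 4 * (alphaH ε) ^ 2 * γ ^ 2 / ((k : ℝ) * (hrK k : ℝ))) := by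
  classical
  have hk : k ≠ 0 := by rintro rfl; simpa using hp1
  have hkR : (0:ℝ) < k := by exact_mod_cast Nat.pos_of_ne_zero hk
  set t := Nat.clog 2 (k + 1) with ht
  have hKval : hrK k = 2 ^ t := rfl
  have hKpos : 0 < (hrK k : ℝ) := by
    have : 0 < hrK k := by rw [hKval]; positivity
    exact_mod_cast this
  have hKne : (hrK k : ℝ) ≠ 0 := ne_of_gt hKpos
  have hexp : 1 < Real.exp ε := Real.one_lt_exp_iff.mpr hε0
  have hE1 : (0:ℝ) < Real.exp ε + 1 := by linarith
  have hα0 : 0 < alphaH ε := by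
    unfold alphaH; apply div_pos <;> linarith
  have hα1 : alphaH ε < 1 := by
    unfold alphaH; rw [div_lt_one hE1]; linarith
  set α := alphaH ε with hα
  set Kr := (hrK k : ℝ) with hKr
  -- the sign function
  set s : Fin k → Fin (hrK k) → ℝ :=
    fun x z => ((hadSign t (φ x).val z.val : ℤ) : ℝ) with hs
  have hs_pm : ∀ x z, s x z = 1 ∨ s x z = -1 := by
    intro x z
    rcases hadSign_eq_one_or t (φ x).val z.val with h | h
    · left; simp [hs, h]
    · right; simp [hs, h]
  -- channel rewrite
  have hW : ∀ x z, hrW ε φ x z = 1 / Kr + α / Kr * s x z := by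
    intro x z
    unfold hrW
    rcases hadSign_eq_one_or t (φ x).val z.val with h | h
    · rw [if_pos h]
      have : s x z = 1 := by simp [hs, h]
      rw [this, hα]; unfold alphaH; rw [← hKr]
      field_simp; ring
    · rw [if_neg (by rw [h]; norm_num)]
      have : s x z = -1 := by simp [hs, h]
      rw [this, hα]; unfold alphaH; rw [← hKr]
      field_simp; ring
  -- sum of signs vs Dcard
  have hDs : ∀ z, ∑ x, s x z = 2 * (Dcard φ z : ℝ) - k := by
    intro z
    have hb : ∀ x : Fin k, s x z
        = if hadSign t (φ x).val z.val = 1 then (1:ℝ) else -1 := by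
      intro x
      rcases hadSign_eq_one_or t (φ x).val z.val with h | h <;> simp [hs, h]
    rw [Finset.sum_congr rfl fun x _ => hb x, Finset.sum_ite, Finset.sum_const,
      Finset.sum_const]
    have hcard : (Finset.univ.filter fun x : Fin k =>
        ¬ hadSign t (φ x).val z.val = 1).card = k - Dcard φ z := by
      rw [Finset.filter_not, Finset.card_sdiff_of_subset (Finset.filter_subset _ _)]
      simp [Dcard]
      rfl
    have hc1 : (Finset.univ.filter fun x : Fin k =>
        hadSign t (φ x).val z.val = 1).card = Dcard φ z := rfl
    rw [hc1, hcard]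
    have hDle : Dcard φ z ≤ k := by
      have := Finset.card_filter_le Finset.univ
        (fun x : Fin k => hadSign t (φ x).val z.val = 1)
      simpa [Dcard] using this
    have hsub : ((k - Dcard φ z : ℕ) : ℝ) = (k : ℝ) - Dcard φ z := by
      push_cast [Nat.cast_sub hDle]; ring
    simp only [nsmul_eq_mul, mul_one, mul_neg_one, hsub]
    ring
  -- rewrite of q*
  have hQ : ∀ z, hrQstar ε φ z = 1 / Kr + α / Kr * ((1 / k) * ∑ x, s x z) := by
    intro z
    unfold hrQstar
    rw [← hα, ← hKr]
    rw [hDs z]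
    field_simp
  -- rewrite of q
  have hOut : ∀ z, hrOut ε φ p z = 1 / Kr + α / Kr * ∑ x, s x z * p x := by
    intro z
    unfold hrOut
    calc ∑ x, hrW ε φ x z * p x
        = ∑ x, ((1 / Kr) * p x + α / Kr * (s x z * p x)) := by
          refine Finset.sum_congr rfl fun x _ => ?_
          rw [hW x z]; ring
      _ = 1 / Kr + α / Kr * ∑ x, s x z * p x := by
          rw [Finset.sum_add_distrib, ← Finset.mul_sum, ← Finset.mul_sum, hp1]; ring
  -- difference formula
  have hdiff : ∀ z, hrOut ε φ p z - hrQstar ε φ z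
      = α / Kr * ∑ x, (p x - 1 / (k:ℝ)) * s x z := by
    intro z
    rw [hOut z, hQ z]
    have : ∑ x, (p x - 1 / (k:ℝ)) * s x z
        = (∑ x, s x z * p x) - (1 / k) * ∑ x, s x z := by
      rw [Finset.mul_sum, ← Finset.sum_sub_distrib]
      refine Finset.sum_congr rfl fun x _ => ?_
      ring
    rw [this]; ring
  -- row sums vanish
  have hrow : ∀ x : Fin k, ∑ z : Fin (hrK k), s x z = 0 := by
    intro x
    have h0 : ∑ z ∈ Finset.range (2 ^ t), hadSign t (φ x).val z = 0 :=
      hadSign_row_sum t (φ x).val (hφ0 x) (by rw [← hKval]; exact (φ x).isLt)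
    have : ∑ z : Fin (hrK k), s x z
        = ((∑ z ∈ Finset.range (hrK k), hadSign t (φ x).val z : ℤ) : ℝ) := by
      push_cast
      rw [← Fin.sum_univ_eq_sum_range (fun z => ((hadSign t (φ x).val z : ℤ) : ℝ)) (hrK k)]
    rw [this]
    simp only [hKval, h0, Int.cast_zero]
  -- orthogonality
  have horth : ∀ x y : Fin k, ∑ z : Fin (hrK k), s x z * s y z
      = if x = y then Kr else 0 := by
    intro x y
    have hcast : ∑ z : Fin (hrK k), s x z * s y z
        = ((∑ z ∈ Finset.range (hrK k),
            hadSign t (φ x).val z * hadSign t (φ y).val z : ℤ) : ℝ) := by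
      push_cast
      rw [← Fin.sum_univ_eq_sum_range
        (fun z => ((hadSign t (φ x).val z : ℤ) : ℝ) * ((hadSign t (φ y).val z : ℤ) : ℝ)) (hrK k)]
    by_cases hxy : x = y
    · subst hxy
      rw [if_pos rfl, hcast]
      have : ∀ z ∈ Finset.range (hrK k),
          hadSign t (φ x).val z * hadSign t (φ x).val z = 1 := by
        intro z _
        rcases hadSign_eq_one_or t (φ x).val z with h | h <;> rw [h] <;> norm_num
      rw [Finset.sum_congr rfl this, Finset.sum_const, Finset.card_range]
      simp [hKr]
    · rw [if_neg hxy, hcast]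
      have hne : (φ x).val ^^^ (φ y).val ≠ 0 := by
        intro h
        exact hxy (hφ (Fin.val_injective (by simpa [Nat.xor_assoc] using congrArg (· ^^^ (φ y).val) h)))
      have hlt : (φ x).val ^^^ (φ y).val < 2 ^ t :=
        Nat.xor_lt_two_pow (by rw [← hKval]; exact (φ x).isLt)
          (by rw [← hKval]; exact (φ y).isLt)
      have hmul : ∑ z ∈ Finset.range (hrK k),
          hadSign t (φ x).val z * hadSign t (φ y).val z
          = ∑ z ∈ Finset.range (hrK k), hadSign t ((φ x).val ^^^ (φ y).val) z :=
        Finset.sum_congr rfl fun z _ => hadSign_mul t (φ x).val (φ y).val z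
      have hrs : ∑ z ∈ Finset.range (hrK k), hadSign t ((φ x).val ^^^ (φ y).val) z
          = 0 := hadSign_row_sum t _ hne hlt
      rw [hmul]
      simp only [hrs, Int.cast_zero]
  -- main ℓ₂ identity
  have hmain : ∑ z, (hrOut ε φ p z - hrQstar ε φ z) ^ 2
      = α ^ 2 / Kr * ∑ x, (p x - 1 / (k:ℝ)) ^ 2 := by
    have e1 : ∑ z, (hrOut ε φ p z - hrQstar ε φ z) ^ 2
        = α ^ 2 / Kr ^ 2 * ∑ z : Fin (hrK k), ∑ x, ∑ y,
            ((p x - 1/(k:ℝ)) * (p y - 1/(k:ℝ))) * (s x z * s y z) := by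
      rw [Finset.mul_sum]
      refine Finset.sum_congr rfl fun z _ => ?_
      rw [hdiff z, mul_pow, pow_two (∑ x, (p x - 1/(k:ℝ)) * s x z),
        Finset.sum_mul_sum, div_pow]
      refine congrArg (fun v => α ^ 2 / Kr ^ 2 * v) ?_
      exact Finset.sum_congr rfl fun x _ => Finset.sum_congr rfl fun y _ => by ring
    rw [e1, Finset.sum_comm]
    have e2 : ∀ x : Fin k, (∑ z : Fin (hrK k), ∑ y : Fin k,
        ((p x - 1/(k:ℝ)) * (p y - 1/(k:ℝ))) * (s x z * s y z))
        = (p x - 1/(k:ℝ))^2 * Kr := by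
      intro x
      rw [Finset.sum_comm]
      have e3 : ∀ y : Fin k, ∑ z : Fin (hrK k),
          ((p x - 1/(k:ℝ)) * (p y - 1/(k:ℝ))) * (s x z * s y z)
          = if x = y then (p x - 1/(k:ℝ)) * (p y - 1/(k:ℝ)) * Kr else 0 := by
        intro y
        rw [← Finset.mul_sum, horth x y]
        split <;> simp
      rw [Finset.sum_congr rfl fun y _ => e3 y, Finset.sum_ite_eq]
      simp [sq]
    rw [Finset.sum_congr rfl fun x _ => e2 x, ← Finset.sum_mul]
    field_simp
    exact Finset.sum_congr rfl fun x _ => by ring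
  -- q* bounds
  have hDle : ∀ z, (Dcard φ z : ℝ) ≤ k := by
    intro z
    have := Finset.card_filter_le Finset.univ
      (fun x : Fin k => hadSign t (φ x).val z.val = 1)
    have h2 : Dcard φ z ≤ k := by simpa [Dcard] using this
    exact_mod_cast h2
  have hq0 : ∀ z, 0 ≤ hrQstar ε φ z := by
    intro z
    unfold hrQstar
    rw [← hα, ← hKr]
    have h1 : (-1:ℝ) ≤ 2 * (Dcard φ z : ℝ) / k - 1 := by
      have : 0 ≤ 2 * (Dcard φ z : ℝ) / k := by positivity
      linarith
    have h2 : 0 ≤ α / Kr := by positivity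
    have h3 := mul_le_mul_of_nonneg_left h1 h2
    have h4 : α / Kr ≤ 1 / Kr := by gcongr <;> linarith
    linarith [h3, h4]
  have hqle : ∀ z, hrQstar ε φ z ≤ (1 + α) / Kr := by
    intro z
    unfold hrQstar
    rw [← hα, ← hKr]
    have hd : 2 * (Dcard φ z : ℝ) / k ≤ 2 := by
      rw [div_le_iff₀ hkR]
      nlinarith [hDle z]
    have h2 : 0 ≤ α / Kr := by positivity
    have h3 := mul_le_mul_of_nonneg_left (show 2 * (Dcard φ z : ℝ) / k - 1 ≤ 1 by linarith) h2
    have h4 : (1 + α) / Kr = 1 / Kr + α / Kr := by ring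
    rw [h4]
    nlinarith [h3]
  refine ⟨hq0, ?_, ?_, hmain, ?_, ?_⟩
  · -- sums to 1
    rw [Finset.sum_congr rfl fun z _ => hQ z, Finset.sum_add_distrib,
      Finset.sum_const, ← Finset.mul_sum, ← Finset.mul_sum, Finset.sum_comm]
    rw [Finset.sum_congr rfl fun x _ => hrow x]
    simp [hKr, hKne]
    exact mul_inv_cancel₀ hKne
  · -- ℓ₂ norm bound
    have hsum : ∑ z, (hrQstar ε φ z) ^ 2 ≤ (1 + α)^2 / Kr := by
      have : ∀ z : Fin (hrK k), (hrQstar ε φ z)^2 ≤ ((1 + α) / Kr)^2 := by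
        intro z
        have := hq0 z
        have := hqle z
        nlinarith
      calc ∑ z, (hrQstar ε φ z) ^ 2 ≤ ∑ _z : Fin (hrK k), ((1 + α) / Kr)^2 :=
            Finset.sum_le_sum fun z _ => this z
        _ = (1 + α)^2 / Kr := by
            rw [Finset.sum_const]
            simp only [Finset.card_univ, Fintype.card_fin, nsmul_eq_mul]
            rw [div_pow]
            field_simp
            ring
    calc Real.sqrt (∑ z, (hrQstar ε φ z) ^ 2) ≤ Real.sqrt ((1 + α)^2 / Kr) :=
          Real.sqrt_le_sqrt hsum
      _ = (1 + α) / Real.sqrt Kr := by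
          rw [Real.sqrt_div (by positivity), Real.sqrt_sq (by linarith)]
  · -- uniform
    intro hpu
    subst hpu
    funext z
    have h := hdiff z
    simp only [sub_self, zero_mul, mul_zero, Finset.sum_const_zero] at h
    linarith [h]
  · -- TV lower bound
    intro hTV
    rw [hmain, gt_iff_lt]
    have hCS : (∑ x, |p x - 1/(k:ℝ)|)^2 ≤ (k:ℝ) * ∑ x, (p x - 1/(k:ℝ))^2 := by
      have := Finset.sum_mul_sq_le_sq_mul_sq Finset.univ
        (fun _ : Fin k => (1:ℝ)) (fun x => |p x - 1/(k:ℝ)|)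
      simpa [Finset.card_univ, sq_abs, one_mul] using this
    exact final_ineq α γ (k:ℝ) Kr _ _ (by positivity) hkR hKpos hCS hTV hγ
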